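/- Let ℓ be an odd prime, ρ ≥ 1, R_ρ = Z/ℓ^ρ, g ≥ 1, and x, y ∈ R_ρ^× with x ≡ y ≡ 1 mod ℓ^ξ and x, y ≢ 1 mod ℓ^{ξ+1} for some 1 ≤ ξ < ρ. Then for every finite abelian ℓ-group A, |{γ ∈ GSp^{(x)}_{2g}(R_ρ) : ker(Id−γ) ≅ A}| = |{γ ∈ GSp^{(y)}_{2g}(R_ρ) : ker(Id−γ) ≅ A}|. -/

import Mathlib

open Matrix

/-- The standard symplectic matrix `J` of size `2g` over `R`. -/
def stdJ (g : ℕ) (R : Type*) [CommRing R] : Matrix (Fin g ⊕ Fin g) (Fin g ⊕ Fin g) R :=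
  Matrix.fromBlocks 0 1 (-1) 0


lemma aux_nat_dvd (ℓ ξ j : ℕ) (hℓ : ℓ.Prime) (h3 : 3 ≤ ℓ) (hξ : 1 ≤ ξ)
    (h2 : 2 ≤ j) (hj : j ≤ ℓ) : ℓ ^ (ξ + 2) ∣ ℓ.choose j * ℓ ^ (j * ξ) := by
  rcases eq_or_lt_of_le hj with h | hjl
  · rw [h, Nat.choose_self, one_mul]
    exact pow_dvd_pow ℓ (by nlinarith)
  · obtain ⟨c, hc⟩ := Nat.Prime.dvd_choose_self hℓ (by omega) hjl
    rw [hc]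
    calc ℓ ^ (ξ + 2) ∣ ℓ ^ (1 + j * ξ) := pow_dvd_pow ℓ (by nlinarith)
    _ = ℓ * ℓ ^ (j * ξ) := by ring
    _ ∣ ℓ * c * ℓ ^ (j * ξ) := mul_dvd_mul_right ⟨c, by ring⟩ _

lemma aux_pow_ell {R : Type*} [CommRing R] (ℓ : ℕ) (hℓ : ℓ.Prime) (h3 : 3 ≤ ℓ)
    (ξ : ℕ) (hξ : 1 ≤ ξ) (d : R) :
    ∃ e, (1 + (ℓ : R) ^ ξ * d) ^ ℓ = 1 + (ℓ : R) ^ (ξ + 1) * d + (ℓ : R) ^ (ξ + 2) * e := by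
  have hexp := add_pow ((ℓ : R) ^ ξ * d) 1 ℓ
  have hsplit : Finset.range (ℓ + 1) = Finset.range ((ℓ - 1) + 1 + 1) := by
    congr 1; omega
  have hdvd : ((ℓ : R)) ^ (ξ + 2) ∣
      ∑ k ∈ Finset.range (ℓ - 1), ((ℓ : R) ^ ξ * d) ^ (k + 1 + 1) * 1 ^ (ℓ - (k + 1 + 1)) *
        (ℓ.choose (k + 1 + 1) : R) := by
    apply Finset.dvd_sum
    intro k hk
    have hk' : k + 2 ≤ ℓ := by simp at hk; omega
    obtain ⟨c, hc⟩ := aux_nat_dvd ℓ ξ (k + 2) hℓ h3 hξ (by omega) hk'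
    refine ⟨(c : R) * d ^ (k + 2), ?_⟩
    have h2 : ((ℓ : R) ^ ξ) ^ (k + 2) = ((ℓ ^ ((k + 2) * ξ) : ℕ) : R) := by
      push_cast; ring
    show ((ℓ:R) ^ ξ * d) ^ (k+2) * 1 ^ (ℓ - (k + 2)) * (ℓ.choose (k+2) : R) = _
    rw [mul_pow, h2, one_pow, mul_one]
    calc ((ℓ ^ ((k+2)*ξ) : ℕ) : R) * d ^ (k+2) * ((ℓ.choose (k+2) : ℕ) : R)
        = ((ℓ.choose (k+2) * ℓ ^ ((k+2)*ξ) : ℕ) : R) * d ^ (k+2) := by push_cast; ring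
      _ = ((ℓ ^ (ξ+2) * c : ℕ) : R) * d ^ (k+2) := by rw [← hc]
      _ = (ℓ : R) ^ (ξ+2) * ((c : R) * d ^ (k+2)) := by push_cast; ring
  obtain ⟨e, he⟩ := hdvd
  refine ⟨e, ?_⟩
  rw [add_comm (1 : R) ((ℓ:R) ^ ξ * d), hexp, hsplit, Finset.sum_range_succ',
    Finset.sum_range_succ', he]
  simp [Nat.choose_one_right]
  push_cast
  ring

lemma aux_pow_nat {R : Type*} [CommRing R] (ℓ a : ℕ) (ha : 1 ≤ a) (u : R) :
    ∀ c : ℕ, ∃ w, (1 + (ℓ : R) ^ a * u) ^ c = 1 + (ℓ : R) ^ a * ((c : R) * u + ℓ * w) := by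
  obtain ⟨b, rfl⟩ : ∃ b, a = b + 1 := ⟨a - 1, by omega⟩
  intro c
  induction c with
  | zero => exact ⟨0, by simp⟩
  | succ c ih =>
    obtain ⟨w, hw⟩ := ih
    refine ⟨w + (ℓ:R) ^ b * ((c : R) * u + ℓ * w) * u, ?_⟩
    rw [pow_succ, hw]
    push_cast
    ring

lemma aux_pow_pow {R : Type*} [CommRing R] (ℓ : ℕ) (hℓ : ℓ.Prime) (h3 : 3 ≤ ℓ)
    (ξ : ℕ) (hξ : 1 ≤ ξ) (d : R) :
    ∀ j : ℕ, ∃ e, (1 + (ℓ : R) ^ ξ * d) ^ (ℓ ^ j) = 1 + (ℓ : R) ^ (ξ + j) * (d + ℓ * e) := by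
  intro j
  induction j with
  | zero => exact ⟨0, by simp⟩
  | succ j ih =>
    obtain ⟨e, he⟩ := ih
    obtain ⟨e', he'⟩ := aux_pow_ell ℓ hℓ h3 (ξ + j) (by omega) (d + ℓ * e)
    refine ⟨e + e', ?_⟩
    rw [pow_succ, pow_mul, he, he']
    push_cast
    ring

lemma aux_dlog (ℓ ρ ξ : ℕ) (hℓ : ℓ.Prime) (h3 : 3 ≤ ℓ) (hξ : 0 < ξ) (hξρ : ξ < ρ)
    (xr yr : ZMod (ℓ ^ ρ))
    (hx1 : ∃ d, xr = 1 + (ℓ : ZMod (ℓ ^ ρ)) ^ ξ * d)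
    (hx2 : ¬∃ d, xr = 1 + (ℓ : ZMod (ℓ ^ ρ)) ^ (ξ + 1) * d)
    (hy1 : ∃ d, yr = 1 + (ℓ : ZMod (ℓ ^ ρ)) ^ ξ * d)
    (hy2 : ¬∃ d, yr = 1 + (ℓ : ZMod (ℓ ^ ρ)) ^ (ξ + 1) * d) :
    ∃ k : ℕ, ¬ ℓ ∣ k ∧ yr = xr ^ k ∧ xr ^ (ℓ ^ (ρ - ξ)) = 1 := by
  haveI : NeZero (ℓ ^ ρ) := ⟨pow_ne_zero _ hℓ.pos.ne'⟩
  have hρ0 : (ℓ : ZMod (ℓ ^ ρ)) ^ ρ = 0 := by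
    have h := ZMod.natCast_self (ℓ ^ ρ)
    push_cast at h
    exact h
  have hnil : ∀ a : ℕ, 1 ≤ a → ∀ u : ZMod (ℓ ^ ρ), IsNilpotent ((ℓ : ZMod (ℓ ^ ρ)) ^ a * u) := by
    intro a ha u
    have h1 : ρ ≤ a * ρ := Nat.le_mul_of_pos_left ρ (by omega)
    exact ⟨ρ, by rw [mul_pow, ← pow_mul, ← Nat.add_sub_cancel' h1, pow_add, hρ0, zero_mul,
      zero_mul]⟩
  have hunit1 : ∀ a : ℕ, 1 ≤ a → ∀ u : ZMod (ℓ ^ ρ), IsUnit (1 + (ℓ : ZMod (ℓ ^ ρ)) ^ a * u) := fun a ha u =>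
    (hnil a ha u).isUnit_one_add
  obtain ⟨d, hd⟩ := hx1
  have hdu : IsUnit d := by
    by_contra hdu
    apply hx2
    have hco : ¬ Nat.Coprime d.val (ℓ ^ ρ) := by
      intro h
      have h2 := (ZMod.isUnit_iff_coprime d.val (ℓ ^ ρ)).mpr h
      rw [ZMod.natCast_val, ZMod.cast_id] at h2
      exact hdu h2
    have hgd : ℓ ∣ d.val := by
      obtain ⟨i, hi, hgi⟩ := (Nat.dvd_prime_pow hℓ).mp (Nat.gcd_dvd_right d.val (ℓ ^ ρ))
      have hine : i ≠ 0 := by rintro rfl; exact hco (by simpa using hgi)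
      calc ℓ ∣ ℓ ^ i := dvd_pow_self ℓ hine
        _ = Nat.gcd d.val (ℓ ^ ρ) := hgi.symm
        _ ∣ d.val := Nat.gcd_dvd_left _ _
    obtain ⟨c, hc⟩ := hgd
    have hdc : d = (ℓ : ZMod (ℓ ^ ρ)) * (c : ZMod (ℓ ^ ρ)) := by
      have : ((d.val : ℕ) : ZMod (ℓ ^ ρ)) = ((ℓ * c : ℕ) : ZMod (ℓ ^ ρ)) := by rw [← hc]
      rw [ZMod.natCast_val, ZMod.cast_id] at this
      push_cast at this
      exact this
    exact ⟨(c : ZMod (ℓ ^ ρ)), by rw [hd, hdc, pow_succ]; ring⟩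
  -- main induction
  have key : ∀ j : ℕ, ∃ n : ℕ, ∃ t : ZMod (ℓ ^ ρ), yr = xr ^ n * (1 + (ℓ : ZMod (ℓ ^ ρ)) ^ (ξ + j) * t) := by
    intro j
    induction j with
    | zero => obtain ⟨t, ht⟩ := hy1; exact ⟨0, t, by rw [pow_zero, one_mul, ht]; norm_num⟩
    | succ j ih =>
      obtain ⟨n, t, hnt⟩ := ih
      obtain ⟨e, he⟩ := aux_pow_pow ℓ hℓ h3 ξ hξ d j
      have hu₀ : IsUnit (d + (ℓ : ZMod (ℓ ^ ρ)) * e) := by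
        refine IsNilpotent.isUnit_add_left_of_commute ?_ hdu (Commute.all _ _)
        simpa using hnil 1 le_rfl e
      set c : ℕ := (t * ↑hu₀.unit⁻¹).val with hcdef
      have hcu : (c : ZMod (ℓ ^ ρ)) * (d + (ℓ : ZMod (ℓ ^ ρ)) * e) = t := by
        rw [hcdef, ZMod.natCast_val, ZMod.cast_id, mul_assoc]
        nth_rewrite 2 [← IsUnit.unit_spec hu₀]
        rw [Units.inv_mul, mul_one]
      obtain ⟨w, hw⟩ := aux_pow_nat ℓ (ξ + j) (by omega) (d + (ℓ : ZMod (ℓ ^ ρ)) * e) c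
      have hx_pow : xr ^ (ℓ ^ j * c) = 1 + (ℓ : ZMod (ℓ ^ ρ)) ^ (ξ + j) * (t + ℓ * w) := by
        rw [hd, pow_mul, he, hw, hcu]
      have hBu : IsUnit (1 + (ℓ : ZMod (ℓ ^ ρ)) ^ (ξ + j) * (t + ℓ * w)) := hunit1 (ξ + j) (by omega) _
      have hBB : (1 + (ℓ : ZMod (ℓ ^ ρ)) ^ (ξ + j) * (t + ℓ * w)) * ↑hBu.unit⁻¹ = 1 := by
        nth_rewrite 1 [← IsUnit.unit_spec hBu]
        exact Units.mul_inv _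
      refine ⟨n + ℓ ^ j * c, -w * ↑hBu.unit⁻¹, ?_⟩
      rw [pow_add, hnt, hx_pow, mul_assoc]
      congr 1
      linear_combination ((ℓ : ZMod (ℓ ^ ρ)) ^ (ξ + j + 1) * w) * hBB
  obtain ⟨n, t, hnt⟩ := key (ρ - ξ)
  have hzero : (ℓ : ZMod (ℓ ^ ρ)) ^ (ξ + (ρ - ξ)) = 0 := by
    rw [show ξ + (ρ - ξ) = ρ by omega, hρ0]
  have hyx : yr = xr ^ n := by rw [hnt, hzero]; ring
  have hxr1 : xr ^ ℓ ^ (ρ - ξ) = 1 := by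
    obtain ⟨e, he⟩ := aux_pow_pow ℓ hℓ h3 ξ hξ d (ρ - ξ)
    rw [hd, he, hzero, zero_mul, add_zero]
  refine ⟨n, ?_, hyx, hxr1⟩
  rintro ⟨n', rfl⟩
  apply hy2
  obtain ⟨e, he⟩ := aux_pow_pow ℓ hℓ h3 ξ hξ d 1
  obtain ⟨w, hw⟩ := aux_pow_nat ℓ (ξ + 1) (by omega) (d + (ℓ : ZMod (ℓ ^ ρ)) * e) n'
  refine ⟨(n' : ZMod (ℓ ^ ρ)) * (d + (ℓ : ZMod (ℓ ^ ρ)) * e) + ℓ * w, ?_⟩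
  have he' : (1 + (ℓ : ZMod (ℓ ^ ρ)) ^ ξ * d) ^ ℓ
      = 1 + (ℓ : ZMod (ℓ ^ ρ)) ^ (ξ + 1) * (d + (ℓ : ZMod (ℓ ^ ρ)) * e) := by
    simpa using he
  rw [hyx, hd, pow_mul, he', hw]

/-- If `x, y ∈ (Z/ℓ^ρ)^×` both satisfy `x ≡ 1 (mod ℓ^ξ)` and
`x ≢ 1 (mod ℓ^{ξ+1})`, then for every finite abelian `ℓ`-group `A` the number
of symplectic similitudes with multiplier `x` whose fixed-point kernel
`ker(Id−γ)` is isomorphic to `A` equals the corresponding number for `y`. -/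
theorem card_ker_iso_eq_of_same_depth (ℓ : ℕ) (hℓ : ℓ.Prime) (hodd : Odd ℓ)
    (ρ g ξ : ℕ) (hg : 0 < g) (hξ : 0 < ξ) (hξρ : ξ < ρ)
    (x y : (ZMod (ℓ ^ ρ))ˣ)
    (hx1 : ∃ d, (x : ZMod (ℓ ^ ρ)) = 1 + (ℓ : ZMod (ℓ ^ ρ)) ^ ξ * d)
    (hx2 : ¬∃ d, (x : ZMod (ℓ ^ ρ)) = 1 + (ℓ : ZMod (ℓ ^ ρ)) ^ (ξ + 1) * d)
    (hy1 : ∃ d, (y : ZMod (ℓ ^ ρ)) = 1 + (ℓ : ZMod (ℓ ^ ρ)) ^ ξ * d)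
    (hy2 : ¬∃ d, (y : ZMod (ℓ ^ ρ)) = 1 + (ℓ : ZMod (ℓ ^ ρ)) ^ (ξ + 1) * d)
    (A : Type*) [AddCommGroup A] [Finite A]
    (hℓgrp : ∀ a : A, ∃ n : ℕ, (ℓ ^ n) • a = 0) :
    Nat.card {γ : Matrix (Fin g ⊕ Fin g) (Fin g ⊕ Fin g) (ZMod (ℓ ^ ρ)) //
        γᵀ * stdJ g (ZMod (ℓ ^ ρ)) * γ = (x : ZMod (ℓ ^ ρ)) • stdJ g (ZMod (ℓ ^ ρ)) ∧
        Nonempty (LinearMap.ker ((1 - γ).mulVecLin) ≃+ A)}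
      = Nat.card {γ : Matrix (Fin g ⊕ Fin g) (Fin g ⊕ Fin g) (ZMod (ℓ ^ ρ)) //
        γᵀ * stdJ g (ZMod (ℓ ^ ρ)) * γ = (y : ZMod (ℓ ^ ρ)) • stdJ g (ZMod (ℓ ^ ρ)) ∧
        Nonempty (LinearMap.ker ((1 - γ).mulVecLin) ≃+ A)} := by
  have h3 : 3 ≤ ℓ := by
    obtain ⟨c, hc⟩ := hodd
    have := hℓ.two_le
    omega
  haveI : NeZero (ℓ ^ ρ) := ⟨pow_ne_zero _ hℓ.pos.ne'⟩
  set R := ZMod (ℓ ^ ρ) with hRdef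
  set J := stdJ g R with hJdef
  have hJJ : J * J = -1 := by
    simp [hJdef, stdJ, Matrix.fromBlocks_multiply, ← Matrix.fromBlocks_one,
      Matrix.fromBlocks_neg]
  -- multiplier multiplicativity
  have hmulP : ∀ (γ δ : Matrix (Fin g ⊕ Fin g) (Fin g ⊕ Fin g) R) (z z' : R),
      γᵀ * J * γ = z • J → δᵀ * J * δ = z' • J → (γ * δ)ᵀ * J * (γ * δ) = (z * z') • J := by
    intro γ δ z z' h1 h2
    calc (γ * δ)ᵀ * J * (γ * δ) = δᵀ * (γᵀ * J * γ) * δ := by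
          rw [Matrix.transpose_mul]; noncomm_ring
      _ = δᵀ * (z • J) * δ := by rw [h1]
      _ = z • (δᵀ * J * δ) := by rw [Matrix.mul_smul, Matrix.smul_mul]
      _ = z • (z' • J) := by rw [h2]
      _ = (z * z') • J := by rw [smul_smul]
  have hpowP : ∀ (γ : Matrix (Fin g ⊕ Fin g) (Fin g ⊕ Fin g) R) (z : R),
      γᵀ * J * γ = z • J → ∀ n : ℕ, (γ ^ n)ᵀ * J * (γ ^ n) = z ^ n • J := by
    intro γ z h n
    induction n with
    | zero => simp
    | succ n ih =>
      rw [pow_succ, pow_succ]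
      exact hmulP _ _ _ _ ih h
  have hunitP : ∀ (γ : Matrix (Fin g ⊕ Fin g) (Fin g ⊕ Fin g) R) (z : R),
      γᵀ * J * γ = z • J → IsUnit z → IsUnit γ := by
    intro γ z h hz
    have hB : ((((hz.unit⁻¹ : Rˣ) : R)) • (-J * γᵀ * J)) * γ = 1 := by
      rw [Matrix.smul_mul]
      have h2 : -J * γᵀ * J * γ = z • (1 : Matrix (Fin g ⊕ Fin g) (Fin g ⊕ Fin g) R) := by
        calc -J * γᵀ * J * γ = -(J * (γᵀ * J * γ)) := by simp only [mul_assoc]; exact neg_mul _ _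
          _ = -(J * (z • J)) := by rw [h]
          _ = -(z • (J * J)) := by rw [Matrix.mul_smul]
          _ = z • (1 : Matrix (Fin g ⊕ Fin g) (Fin g ⊕ Fin g) R) := by rw [hJJ]; simp; exact neg_neg _
      rw [h2, smul_smul]
      nth_rewrite 2 [← IsUnit.unit_spec hz]
      rw [Units.inv_mul, one_smul]
    exact ⟨⟨γ, _, mul_eq_one_comm.mp hB, hB⟩, rfl⟩
  -- discrete log
  obtain ⟨k, hkℓ, hyk, hxr1⟩ := aux_dlog ℓ ρ ξ hℓ h3 hξ hξρ x y hx1 hx2 hy1 hy2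
  -- the big exponent
  set E := 2 * Nat.card (Matrix (Fin g ⊕ Fin g) (Fin g ⊕ Fin g) R)ˣ * Nat.card Rˣ with hEdef
  have hM1 : 0 < Nat.card (Matrix (Fin g ⊕ Fin g) (Fin g ⊕ Fin g) R)ˣ := Nat.card_pos
  have hR1 : 0 < Nat.card Rˣ := Nat.card_pos
  have hE1 : 1 < E := by
    have : 2 * 1 * 1 ≤ E := by
      apply Nat.mul_le_mul (Nat.mul_le_mul le_rfl hM1) hR1
    omega
  have hME : ∀ γ : Matrix (Fin g ⊕ Fin g) (Fin g ⊕ Fin g) R, IsUnit γ → γ ^ E = 1 := by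
    intro γ hγ
    have h1 : hγ.unit ^ Nat.card (Matrix (Fin g ⊕ Fin g) (Fin g ⊕ Fin g) R)ˣ = 1 :=
      pow_card_eq_one'
    have h2 : γ ^ Nat.card (Matrix (Fin g ⊕ Fin g) (Fin g ⊕ Fin g) R)ˣ = 1 := by
      rw [← hγ.unit_spec, ← Units.val_pow_eq_pow_val, h1, Units.val_one]
    have hEq : E = Nat.card (Matrix (Fin g ⊕ Fin g) (Fin g ⊕ Fin g) R)ˣ * (2 * Nat.card Rˣ) := by
      rw [hEdef]; ring
    rw [hEq, pow_mul, h2, one_pow]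
  have hxE : (x : R) ^ E = 1 := by
    have h1 : x ^ Nat.card Rˣ = 1 := pow_card_eq_one'
    have h2 : (x : R) ^ Nat.card Rˣ = 1 := by
      rw [← Units.val_pow_eq_pow_val, h1, Units.val_one]
    have hEq : E = Nat.card Rˣ * (2 * Nat.card (Matrix (Fin g ⊕ Fin g) (Fin g ⊕ Fin g) R)ˣ) := by
      rw [hEdef]; ring
    rw [hEq, pow_mul, h2, one_pow]
  -- modular powers helper
  have hmod : ∀ (z : R) (s a b : ℕ), z ^ s = 1 → a ≡ b [MOD s] → z ^ a = z ^ b := by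
    intro z s a b hz hab
    have key : ∀ c : ℕ, z ^ c = z ^ (c % s) := by
      intro c
      conv_lhs => rw [← Nat.div_add_mod c s]
      rw [pow_add, pow_mul, hz, one_pow, one_mul]
    rw [key a, key b]
    rw [Nat.ModEq] at hab
    rw [hab]
  -- choose m
  have hEne : E ≠ 0 := by omega
  have hco : Nat.Coprime (ℓ ^ (ρ - ξ)) (ordCompl[ℓ] E) :=
    Nat.Coprime.pow_left _ (Nat.coprime_ordCompl hℓ hEne)
  obtain ⟨m, hm1, hm2⟩ := Nat.chineseRemainder hco k 1
  have hmℓ : ¬ ℓ ∣ m := by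
    intro hdvd
    apply hkℓ
    have h1 : m ≡ k [MOD ℓ] := Nat.ModEq.of_dvd (dvd_pow_self ℓ (by omega : ρ - ξ ≠ 0)) hm1
    exact Nat.modEq_zero_iff_dvd.mp (h1.symm.trans (Nat.modEq_zero_iff_dvd.mpr hdvd))
  have hcoE : Nat.Coprime m E := by
    have h1 : Nat.Coprime m (ℓ ^ (E.factorization ℓ)) :=
      Nat.Coprime.pow_right _ (Nat.coprime_comm.mp ((Nat.Prime.coprime_iff_not_dvd hℓ).mpr hmℓ))
    have h2 : Nat.Coprime m (ordCompl[ℓ] E) :=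
      Nat.coprime_of_mul_modEq_one 1 (by simpa using hm2)
    rw [← Nat.ordProj_mul_ordCompl_eq_self E ℓ]
    exact h1.mul_right h2
  obtain ⟨m', -, hmm'⟩ := Nat.exists_mul_mod_eq_one_of_coprime hcoE hE1
  have hq : m * m' = E * (m * m' / E) + 1 := by
    have := Nat.div_add_mod (m * m') E
    omega
  -- fixed vectors of powers
  have hfix : ∀ (γ : Matrix (Fin g ⊕ Fin g) (Fin g ⊕ Fin g) R) (v : Fin g ⊕ Fin g → R),
      γ *ᵥ v = v → ∀ n : ℕ, γ ^ n *ᵥ v = v := by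
    intro γ v h n
    induction n with
    | zero => rw [pow_zero, Matrix.one_mulVec]
    | succ n ih => rw [pow_succ, ← Matrix.mulVec_mulVec, h, ih]
  have hcyc : ∀ γ : Matrix (Fin g ⊕ Fin g) (Fin g ⊕ Fin g) R, γ ^ E = 1 →
      γ ^ (m * m') = γ := by
    intro γ hγ
    rw [hq, pow_add, pow_mul, hγ, one_pow, one_mul, pow_one]
  have hcycR : (x : R) ^ (m * m') = (x : R) := by
    rw [hq, pow_add, pow_mul, hxE, one_pow, one_mul, pow_one]
  have hker : ∀ (γ : Matrix (Fin g ⊕ Fin g) (Fin g ⊕ Fin g) R) (a b : ℕ), γ ^ (a * b) = γ →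
      LinearMap.ker ((1 - γ ^ a).mulVecLin) = LinearMap.ker ((1 - γ).mulVecLin) := by
    intro γ a b hab
    ext v
    simp only [LinearMap.mem_ker, Matrix.mulVecLin_apply, Matrix.sub_mulVec, Matrix.one_mulVec,
      sub_eq_zero]
    constructor
    · intro h
      have h2 := hfix (γ ^ a) v h.symm b
      rw [← pow_mul, hab] at h2
      exact h2.symm
    · intro h
      exact (hfix γ v h.symm a).symm
  -- scalar identities
  have hxm : (x : R) ^ m = (y : R) := by
    rw [hyk]
    exact hmod _ _ _ _ hxr1 hm1
  have hym' : (y : R) ^ m' = (x : R) := by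
    rw [hyk, ← pow_mul]
    have h1 : (x : R) ^ (k * m') = (x : R) ^ (m * m') :=
      hmod _ (ℓ ^ (ρ - ξ)) _ _ hxr1 (hm1.symm.mul_right m')
    rw [h1, hcycR]
  -- the bijection
  refine Nat.card_congr ⟨fun γp => ⟨γp.1 ^ m, ?_, ?_⟩, fun δp => ⟨δp.1 ^ m', ?_, ?_⟩, ?_, ?_⟩
  · have := hpowP γp.1 _ γp.2.1 m
    rwa [hxm] at this
  · rw [hker γp.1 m m' (hcyc _ (hME _ (hunitP _ _ γp.2.1 x.isUnit)))]
    exact γp.2.2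
  · have := hpowP δp.1 _ δp.2.1 m'
    rwa [hym'] at this
  · have hc : δp.1 ^ (m' * m) = δp.1 := by
      rw [Nat.mul_comm m' m]
      exact hcyc _ (hME _ (hunitP _ _ δp.2.1 y.isUnit))
    rw [hker δp.1 m' m hc]
    exact δp.2.2
  · intro γp
    apply Subtype.ext
    show (γp.1 ^ m) ^ m' = γp.1
    rw [← pow_mul]
    exact hcyc _ (hME _ (hunitP _ _ γp.2.1 x.isUnit))
  · intro δp
    apply Subtype.ext
    show (δp.1 ^ m') ^ m = δp.1
    rw [← pow_mul, Nat.mul_comm m' m]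
    exact hcyc _ (hME _ (hunitP _ _ δp.2.1 y.isUnit))
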